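/- Let D_S for S ∈ R[[U]] be the derivations of the Riemann–Hopf hierarchy acting on the differential polynomial ring R[[U]][U_1, U_2, ...], defined by D_S(U) = S(U)·U_1, extended as derivations commuting with the total derivative ∂ = Σ_{m≥0} U_{m+1} ∂/∂U_m. Then the derivations pairwise commute: [D_{S_1}, D_{S_2}] = 0 for all S_1, S_2. -/

import Mathlib

/-- Formal derivative of a power series. -/
noncomputable def d1 {R : Type*} [CommRing R] (f : PowerSeries R) : PowerSeries R :=
  PowerSeries.mk fun n => (n + 1 : ℕ) • PowerSeries.coeff (n + 1) f

/-- Let `A = R[[U]][U₁, U₂, …]` be the differential polynomial ring,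
realized as `MvPolynomial ℕ (PowerSeries R)` with the variable `X m` playing the role of
`U_{m+1}` and the coefficient ring `R[[U]]` embedded via `C`.  Let `∂` be the total
derivative (the derivation with `∂(C f) = C(f')·U₁` and `∂ U_m = U_{m+1}`), and for each
`S ∈ R[[U]]` let `D S` be the Riemann–Hopf derivation, i.e. the derivation commuting with
`∂` determined by `D S (U) = S(U)·U₁` (so `D S (C f) = C(f')·C(S)·U₁` and
`D S (U_{m+1}) = ∂^{m+1}(C(S)·U₁)`).  Then the derivations pairwise commute:
`[D S₁, D S₂] = 0` for all `S₁, S₂`. -/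
theorem riemann_hopf_derivations_commute
    {R : Type*} [CommRing R]
    (del : Derivation R (MvPolynomial ℕ (PowerSeries R)) (MvPolynomial ℕ (PowerSeries R)))
    (hdelC : ∀ f : PowerSeries R,
      del (MvPolynomial.C f) = MvPolynomial.C (d1 f) * MvPolynomial.X 0)
    (hdelX : ∀ m : ℕ, del (MvPolynomial.X m) = MvPolynomial.X (m + 1))
    (D : PowerSeries R →
      Derivation R (MvPolynomial ℕ (PowerSeries R)) (MvPolynomial ℕ (PowerSeries R)))
    (hDC : ∀ (S : PowerSeries R) (f : PowerSeries R),
      D S (MvPolynomial.C f) =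
        MvPolynomial.C (d1 f) * (MvPolynomial.C S * MvPolynomial.X 0))
    (hDX : ∀ (S : PowerSeries R) (m : ℕ),
      D S (MvPolynomial.X m) = (⇑del)^[m + 1] (MvPolynomial.C S * MvPolynomial.X 0)) :
    ∀ (S₁ S₂ : PowerSeries R) (a : MvPolynomial ℕ (PowerSeries R)),
      D S₁ (D S₂ a) = D S₂ (D S₁ a) := by
  intro S₁ S₂
  have key : ∀ (E F : Derivation R (MvPolynomial ℕ (PowerSeries R)) (MvPolynomial ℕ (PowerSeries R)))
      (a b : MvPolynomial ℕ (PowerSeries R)),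
      E (F a) = F (E a) → E (F b) = F (E b) → E (F (a * b)) = F (E (a * b)) := by
    intro E F a b ha hb
    simp only [Derivation.leibniz, smul_eq_mul, map_add, ha, hb]
    ring
  have hcomm : ∀ (S : PowerSeries R) (a : MvPolynomial ℕ (PowerSeries R)),
      D S (del a) = del (D S a) := by
    intro S a
    induction a using MvPolynomial.induction_on with
    | C f =>
      simp only [hdelC, Derivation.leibniz, smul_eq_mul, hDC, hDX, Function.iterate_one,
        zero_add, map_add, hdelX]
      ring
    | add p q hp hq => simp [hp, hq]
    | mul_X p n hp =>
      refine key (D S) del p (MvPolynomial.X n) hp ?_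
      rw [hdelX, hDX, hDX]
      exact Function.iterate_succ_apply' (⇑del) (n + 1) _
  have hit : ∀ (S : PowerSeries R) (n : ℕ) (a : MvPolynomial ℕ (PowerSeries R)),
      D S ((⇑del)^[n] a) = (⇑del)^[n] (D S a) := by
    intro S n
    induction n with
    | zero => intro a; simp
    | succ n ih =>
      intro a
      rw [Function.iterate_succ_apply', hcomm, ih, Function.iterate_succ_apply']
  have hbase : ∀ m : ℕ, D S₁ (D S₂ (MvPolynomial.X m)) = D S₂ (D S₁ (MvPolynomial.X m)) := by
    intro m
    rw [hDX, hDX, hit, hit]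
    congr 1
    simp only [Derivation.leibniz, smul_eq_mul, hDC, hDX, Function.iterate_one, zero_add,
      map_add, hdelC, hdelX]
    ring
  intro a
  induction a using MvPolynomial.induction_on with
  | C f =>
    simp only [hDC, Derivation.leibniz, smul_eq_mul, hDX, Function.iterate_one, zero_add,
      map_add, hdelC, hdelX]
    ring
  | add p q hp hq => simp [hp, hq]
  | mul_X p n hp => exact key (D S₁) (D S₂) p (MvPolynomial.X n) hp (hbase n)
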